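/- Let γ = (γ_j)_{j∈ℤ} be a sequence of Hénon-form maps, and suppose there exists R₀ > 0 such that for every R > R₀ there exists ρ > 1 such that every γ_j (j ∈ ℤ) satisfies condition (A) for (R, ρ). If limsup_{n→∞} (1/n) Σ_{j=0}^{n−1} log|δ(γ_j)| > 0, then Leb₄(K_γ⁺) = 0. -/

import Mathlib

open Complex Filter Set Topology MeasureTheory Bornology

noncomputable section

/-- A Hénon-form map `f(x,y) = (y + a, p(y) - δ x)` with `δ ≠ 0` and `deg p ≥ 2`. -/
structure HenonMap : Type where
  a : ℂ
  δ : ℂ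
  p : Polynomial ℂ
  hδ : δ ≠ 0
  hdeg : 2 ≤ p.natDegree

namespace HenonMap

/-- The map itself. -/
def toFun (f : HenonMap) (z : ℂ × ℂ) : ℂ × ℂ :=
  (z.2 + f.a, f.p.eval z.2 - f.δ * z.1)

/-- The inverse map `f⁻¹(x,y) = (δ⁻¹ (p(x - a) - y), x - a)`. -/
def invFun (f : HenonMap) (z : ℂ × ℂ) : ℂ × ℂ :=
  (f.δ⁻¹ * (f.p.eval (z.1 - f.a) - z.2), z.1 - f.a)

end HenonMap

/-- `V_R⁺ = {(x,y) : max(R,|x|) < |y|}`. -/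
def VPlus (R : ℝ) : Set (ℂ × ℂ) := {z | max R (‖z.1‖) < ‖z.2‖}

/-- `V_R⁻ = {(x,y) : max(R,|y|) < |x|}`. -/
def VMinus (R : ℝ) : Set (ℂ × ℂ) := {z | max R (‖z.2‖) < ‖z.1‖}

/-- `D_R = {(x,y) : max(|x|,|y|) < R}`. -/
def DDisk (R : ℝ) : Set (ℂ × ℂ) := {z | max (‖z.1‖) (‖z.2‖) < R}

/-- Condition (A) for `(R, ρ)`. -/
def CondA (f : HenonMap) (R ρ : ℝ) : Prop :=
  (∀ z ∈ closure (VPlus R),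
    f.toFun z ∈ VPlus R ∧ ρ * ‖z.2‖ < ‖(f.toFun z).2‖) ∧
  (∀ z ∈ closure (VMinus R),
    f.invFun z ∈ VMinus R ∧ ρ * ‖z.1‖ < ‖(f.invFun z).1‖)

/-- A parameter-bounded family of Hénon-form maps. -/
def ParamBounded (Γ : Set HenonMap) : Prop :=
  ∃ (D : ℕ) (A d₀ Δ m M : ℝ),
    2 ≤ D ∧ 0 ≤ A ∧ 0 < d₀ ∧ d₀ ≤ Δ ∧ 0 < m ∧ m ≤ M ∧
    ∀ f ∈ Γ,
      f.p.natDegree ≤ D ∧ ‖f.a‖ ≤ A ∧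
      d₀ ≤ ‖f.δ‖ ∧ ‖f.δ‖ ≤ Δ ∧
      (∀ i : ℕ, ‖f.p.coeff i‖ ≤ M) ∧
      m ≤ ‖f.p.leadingCoeff‖

/-- Forward composition: `fwd γ n = γ_{n-1} ∘ ⋯ ∘ γ₀`. -/
def fwd (γ : ℤ → HenonMap) : ℕ → (ℂ × ℂ) → ℂ × ℂ
  | 0 => id
  | n + 1 => fun z => (γ (n : ℤ)).toFun (fwd γ n z)

/-- Backward composition: `bwd γ n = γ_{-n}⁻¹ ∘ ⋯ ∘ γ_{-1}⁻¹`. -/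
def bwd (γ : ℤ → HenonMap) : ℕ → (ℂ × ℂ) → ℂ × ℂ
  | 0 => id
  | n + 1 => fun z => (γ (-((n : ℤ) + 1))).invFun (bwd γ n z)

/-- `K_γ⁺` : points with bounded forward orbit. -/
def KPlus (γ : ℤ → HenonMap) : Set (ℂ × ℂ) :=
  {z | IsBounded (Set.range fun n : ℕ => fwd γ n z)}

/-- `K_γ⁻` : points with bounded backward orbit. -/
def KMinus (γ : ℤ → HenonMap) : Set (ℂ × ℂ) :=
  {z | IsBounded (Set.range fun n : ℕ => bwd γ n z)}

/-- `I_γ⁺` : points whose forward orbit tends to infinity in norm. -/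
def IPlus (γ : ℤ → HenonMap) : Set (ℂ × ℂ) :=
  {z | Tendsto (fun n : ℕ => ‖fwd γ n z‖) atTop atTop}

/-- `I_γ⁻` : points whose backward orbit tends to infinity in norm. -/
def IMinus (γ : ℤ → HenonMap) : Set (ℂ × ℂ) :=
  {z | Tendsto (fun n : ℕ => ‖bwd γ n z‖) atTop atTop}

/-- The iterated shift: `(σⁿ γ)_j = γ_{j+n}`. -/
def shiftIter (γ : ℤ → HenonMap) (n : ℕ) : ℤ → HenonMap := fun j => γ (j + n)

/-- `log⁺ t = max (log t) 0`. -/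
def logPlus (t : ℝ) : ℝ := max (Real.log t) 0

/-- `G_{γ,n}⁺(z) = (deg γ_{n-1} ⋯ deg γ₀)⁻¹ log⁺ ‖γ_{n-1} ∘ ⋯ ∘ γ₀ (z)‖`. -/
def GPlusN (γ : ℤ → HenonMap) (n : ℕ) (z : ℂ × ℂ) : ℝ :=
  (∏ j ∈ Finset.range n, ((γ (j : ℤ)).p.natDegree : ℝ))⁻¹ * logPlus ‖fwd γ n z‖

/-- `G_{γ,n}⁻(z) = (deg γ_{-1} ⋯ deg γ_{-n})⁻¹ log⁺ ‖γ_{-n}⁻¹ ∘ ⋯ ∘ γ_{-1}⁻¹ (z)‖`. -/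
def GMinusN (γ : ℤ → HenonMap) (n : ℕ) (z : ℂ × ℂ) : ℝ :=
  (∏ j ∈ Finset.range n, ((γ (-((j : ℤ) + 1))).p.natDegree : ℝ))⁻¹ * logPlus ‖bwd γ n z‖

section AuxProof
open scoped ENNReal

lemma det_smul_id (c : ℂ) :
    LinearMap.det (c • (LinearMap.id : ℂ →ₗ[ℝ] ℂ)) = Complex.normSq c := by
  rw [← LinearMap.det_toMatrix Complex.basisOneI, Matrix.det_fin_two]
  simp [LinearMap.toMatrix_apply, Complex.normSq_apply, Complex.mul_re, Complex.mul_im]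

lemma map_mul_volume (c : ℂ) (hc : c ≠ 0) :
    Measure.map (fun x : ℂ => c * x) volume
      = (ENNReal.ofReal (Complex.normSq c))⁻¹ • volume := by
  have hdet : LinearMap.det (c • (LinearMap.id : ℂ →ₗ[ℝ] ℂ)) ≠ 0 := by
    rw [det_smul_id]; exact_mod_cast (Complex.normSq_pos.2 hc).ne'
  have := Measure.map_linearMap_addHaar_eq_smul_addHaar (volume : Measure ℂ) hdet
  have heq : ⇑(c • (LinearMap.id : ℂ →ₗ[ℝ] ℂ)) = fun x : ℂ => c * x := by
    funext x; simp [smul_eq_mul]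
  rw [heq, det_smul_id] at this
  rw [this]
  congr 1
  rw [_root_.abs_of_nonneg (inv_nonneg.2 (Complex.normSq_nonneg c)), ENNReal.ofReal_inv_of_pos (Complex.normSq_pos.2 hc)]

lemma henon_inv_to (f : HenonMap) (z : ℂ × ℂ) : f.invFun (f.toFun z) = z := by
  simp only [HenonMap.toFun, HenonMap.invFun, add_sub_cancel_right, sub_sub_cancel]
  rw [inv_mul_cancel_left₀ f.hδ]

lemma henon_injective (f : HenonMap) : Function.Injective f.toFun :=
  Function.LeftInverse.injective (henon_inv_to f)

lemma henon_continuous (f : HenonMap) : Continuous f.toFun :=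
  Continuous.prodMk (continuous_snd.add continuous_const)
    ((f.p.continuous.comp continuous_snd).sub (continuous_const.mul continuous_fst))

lemma smul_prod_volume (c : ℝ≥0∞) (hc : c ≠ ⊤) :
    (volume : Measure ℂ).prod (c • (volume : Measure ℂ)) = c • (volume : Measure ℂ).prod volume := by
  ext s hs
  have h : ∀ x : ℂ, (c • (volume : Measure ℂ)) (Prod.mk x ⁻¹' s) = c * volume (Prod.mk x ⁻¹' s) :=
    fun x => rfl
  rw [Measure.prod_apply hs, Measure.smul_apply, smul_eq_mul, Measure.prod_apply hs]
  simp_rw [h]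
  rw [lintegral_const_mul' _ _ hc]

lemma map_toFun_volume (f : HenonMap) :
    Measure.map f.toFun volume = (ENNReal.ofReal (Complex.normSq f.δ))⁻¹ • volume := by
  set c : ℝ≥0∞ := (ENNReal.ofReal (Complex.normSq f.δ))⁻¹ with hc
  have hctop : c ≠ ⊤ := ENNReal.inv_ne_top.2 (by
    simp only [ne_eq, ENNReal.ofReal_eq_zero, not_le]
    exact Complex.normSq_pos.2 f.hδ)
  have hψ : MeasurePreserving (fun p : ℂ × ℂ => (p.1 + f.a, f.p.eval p.1 - f.δ * p.2))
      (volume.prod volume) (volume.prod (c • volume)) := by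
    refine MeasurePreserving.skew_product (g := fun u v => f.p.eval u - f.δ * v)
      (measurePreserving_add_right volume f.a)
      (((f.p.continuous.comp continuous_fst).sub (continuous_const.mul continuous_snd)).measurable)
      (ae_of_all _ ?_)
    intro u
    show Measure.map (fun v : ℂ => f.p.eval u - f.δ * v) volume = c • volume
    have h1 : (fun v : ℂ => f.p.eval u - f.δ * v)
        = (fun w => f.p.eval u + w) ∘ fun v => (-f.δ) * v := by
      funext v; simp only [Function.comp_apply]; ring
    rw [h1, ← Measure.map_map (measurable_const_add _) (measurable_const_mul _),
      map_mul_volume _ (neg_ne_zero.2 f.hδ), Complex.normSq_neg, Measure.map_smul,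
      (measurePreserving_add_left volume (f.p.eval u)).map_eq]
  have hswap : Measure.map Prod.swap (volume : Measure (ℂ × ℂ)) = volume.prod volume := by
    rw [Measure.volume_eq_prod, Measure.prod_swap]
  have hco : f.toFun = (fun p : ℂ × ℂ => (p.1 + f.a, f.p.eval p.1 - f.δ * p.2)) ∘ Prod.swap := rfl
  rw [hco, ← Measure.map_map hψ.measurable measurable_swap, hswap, hψ.map_eq,
    smul_prod_volume c hctop, Measure.volume_eq_prod]

lemma fwd_continuous (γ : ℤ → HenonMap) (n : ℕ) : Continuous (fwd γ n) := by
  induction n with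
  | zero => exact continuous_id
  | succ n ih => exact (henon_continuous (γ n)).comp ih

lemma fwd_injective (γ : ℤ → HenonMap) (n : ℕ) : Function.Injective (fwd γ n) := by
  induction n with
  | zero => exact fun a b h => h
  | succ n ih => exact fun a b h => ih (henon_injective (γ n) h)

/-- Product of the squared Jacobians. -/
def jacProd (γ : ℤ → HenonMap) (n : ℕ) : ℝ≥0∞ :=
  ∏ j ∈ Finset.range n, ENNReal.ofReal (Complex.normSq (γ (j : ℤ)).δ)

lemma jacProd_ne_zero (γ : ℤ → HenonMap) (n : ℕ) : jacProd γ n ≠ 0 := by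
  rw [jacProd, Finset.prod_ne_zero_iff]
  intro j _
  simp only [ne_eq, ENNReal.ofReal_eq_zero, not_le]
  exact Complex.normSq_pos.2 (γ (j : ℤ)).hδ

lemma jacProd_ne_top (γ : ℤ → HenonMap) (n : ℕ) : jacProd γ n ≠ ⊤ :=
  (ENNReal.prod_lt_top (fun j _ => ENNReal.ofReal_lt_top)).ne

lemma map_fwd (γ : ℤ → HenonMap) (n : ℕ) :
    Measure.map (fwd γ n) volume = (jacProd γ n)⁻¹ • volume := by
  induction n with
  | zero =>
    simp only [jacProd, Finset.range_zero, Finset.prod_empty, inv_one, one_smul]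
    exact Measure.map_id
  | succ n ih =>
    have hco : fwd γ (n + 1) = (γ (n : ℤ)).toFun ∘ fwd γ n := rfl
    rw [hco, ← Measure.map_map (henon_continuous (γ (n : ℤ))).measurable
      (fwd_continuous γ n).measurable, ih, Measure.map_smul, map_toFun_volume, smul_smul]
    congr 1
    conv_rhs => rw [jacProd, Finset.prod_range_succ, ← jacProd]
    rw [ENNReal.mul_inv (Or.inl (jacProd_ne_zero γ n)) (Or.inl (jacProd_ne_top γ n)), mul_comm]

lemma volume_image_fwd (γ : ℤ → HenonMap) (n : ℕ) (S : Set (ℂ × ℂ)) :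
    volume (fwd γ n '' S) = jacProd γ n * volume S := by
  have emb : MeasurableEmbedding (fwd γ n) :=
    (fwd_continuous γ n).measurableEmbedding (fwd_injective γ n)
  have h := emb.map_apply volume (fwd γ n '' S)
  rw [map_fwd, Measure.smul_apply, smul_eq_mul,
    Set.preimage_image_eq _ (fwd_injective γ n)] at h
  rw [← h, ← mul_assoc, ENNReal.mul_inv_cancel (jacProd_ne_zero γ n) (jacProd_ne_top γ n), one_mul]

end AuxProof

/-- if the average logarithm of the Jacobians has positive limsup, then
`K_γ⁺` has Lebesgue measure zero. -/
theorem stmt_8 (γ : ℤ → HenonMap) (R₀ : ℝ) (hR₀ : 0 < R₀)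
    (hA : ∀ R : ℝ, R₀ < R → ∃ ρ : ℝ, 1 < ρ ∧ ∀ j : ℤ, CondA (γ j) R ρ)
    (hlim : 0 < Filter.limsup
      (fun n : ℕ => ((((1 : ℝ) / n) * ∑ j ∈ Finset.range n,
        Real.log (‖(γ (j : ℤ)).δ‖) : ℝ) : EReal)) Filter.atTop) :
    volume (KPlus γ) = 0 := by
  obtain ⟨ε, hε0, hεlt⟩ : ∃ ε : ℝ, 0 < ε ∧ (ε : EReal) <
      Filter.limsup (fun n : ℕ => ((((1 : ℝ) / n) * ∑ j ∈ Finset.range n,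
        Real.log (‖(γ (j : ℤ)).δ‖) : ℝ) : EReal)) Filter.atTop := by
    rcases EReal.lt_iff_exists_real_btwn.1 hlim with ⟨x, hx0, hxl⟩
    exact ⟨x, by exact_mod_cast hx0, hxl⟩
  have hfreq := frequently_lt_of_lt_limsup (by isBoundedDefault) hεlt
  have key : ∀ M : ℕ, volume {z : ℂ × ℂ | ∀ n : ℕ, ‖fwd γ n z‖ ≤ (M : ℝ)} = 0 := by
    intro M
    set S := {z : ℂ × ℂ | ∀ n : ℕ, ‖fwd γ n z‖ ≤ (M : ℝ)} with hSdef
    by_contra hv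
    set B := volume (Metric.closedBall (0 : ℂ × ℂ) M) with hBdef
    have hBtop : B ≠ ⊤ := measure_closedBall_lt_top.ne
    have himg : ∀ n : ℕ, jacProd γ n * volume S ≤ B := by
      intro n
      rw [← volume_image_fwd]
      apply measure_mono
      rintro w ⟨z, hz, rfl⟩
      rw [Metric.mem_closedBall, dist_zero_right]
      exact hz n
    have hbig : ∀ N : ℕ, ENNReal.ofReal (Real.exp (2 * N * ε)) * volume S ≤ B := by
      intro N
      obtain ⟨n, hnN, hn⟩ := Filter.frequently_atTop.1 hfreq (max N 1)
      have hn' : ε < (1 / n : ℝ) * ∑ j ∈ Finset.range n,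
          Real.log (‖(γ (j : ℤ)).δ‖) := by exact_mod_cast hn
      have hn1 : 1 ≤ n := le_trans (le_max_right N 1) hnN
      have hnpos : (0 : ℝ) < n := by exact_mod_cast hn1
      have hsum : (n : ℝ) * ε < ∑ j ∈ Finset.range n,
          Real.log (‖(γ (j : ℤ)).δ‖) := by
        have h3 := mul_lt_mul_of_pos_left hn' hnpos
        rwa [← mul_assoc, mul_one_div_cancel (ne_of_gt hnpos), one_mul] at h3
      have hlogsum : ∑ j ∈ Finset.range n, Real.log (Complex.normSq (γ (j : ℤ)).δ)
          = 2 * ∑ j ∈ Finset.range n, Real.log (‖(γ (j : ℤ)).δ‖) := by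
        rw [Finset.mul_sum]
        refine Finset.sum_congr rfl fun j _ => ?_
        rw [Complex.normSq_eq_norm_sq, Real.log_pow]
        push_cast; ring
      have hprodexp : (∏ j ∈ Finset.range n, Complex.normSq (γ (j : ℤ)).δ)
          = Real.exp (∑ j ∈ Finset.range n, Real.log (Complex.normSq (γ (j : ℤ)).δ)) := by
        rw [Real.exp_sum]
        exact Finset.prod_congr rfl fun j _ =>
          (Real.exp_log (Complex.normSq_pos.2 (γ (j : ℤ)).hδ)).symm
      have hjac : ENNReal.ofReal (Real.exp (2 * N * ε)) ≤ jacProd γ n := by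
        rw [jacProd, ← ENNReal.ofReal_prod_of_nonneg (fun j _ => Complex.normSq_nonneg _),
          hprodexp]
        apply ENNReal.ofReal_le_ofReal
        apply Real.exp_le_exp.2
        rw [hlogsum]
        have hNn : (N : ℝ) ≤ n := by exact_mod_cast le_trans (le_max_left N 1) hnN
        nlinarith
      exact le_trans (mul_le_mul_left hjac _) (himg n)
    obtain ⟨r, hr0, hrv⟩ : ∃ r : ℝ, 0 < r ∧ ENNReal.ofReal r ≤ volume S := by
      rcases eq_or_ne (volume S) ⊤ with h | h
      · exact ⟨1, one_pos, by simp [h]⟩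
      · exact ⟨(volume S).toReal, ENNReal.toReal_pos hv h, by rw [ENNReal.ofReal_toReal h]⟩
    have hreal : ∀ N : ℕ, Real.exp (2 * N * ε) * r ≤ B.toReal := by
      intro N
      have h4 := le_trans (mul_le_mul_right hrv _) (hbig N)
      rw [← ENNReal.ofReal_mul (Real.exp_nonneg _)] at h4
      exact (ENNReal.ofReal_le_iff_le_toReal hBtop).1 h4
    obtain ⟨N, hN⟩ := exists_nat_gt (B.toReal / r / (2 * ε))
    have h1 := Real.add_one_le_exp (2 * N * ε)
    have h2 := hreal N
    have h5 : B.toReal / r < 2 * N * ε := by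
      rw [div_lt_iff₀ (by positivity)] at hN; nlinarith
    rw [div_lt_iff₀ hr0] at h5
    nlinarith [Real.exp_pos (2 * N * ε)]
  have hsub : KPlus γ ⊆ ⋃ M : ℕ, {z : ℂ × ℂ | ∀ n : ℕ, ‖fwd γ n z‖ ≤ (M : ℝ)} := by
    intro z hz
    have hz' : IsBounded (Set.range fun n : ℕ => fwd γ n z) := hz
    obtain ⟨C, hC⟩ := isBounded_iff_forall_norm_le.1 hz'
    refine Set.mem_iUnion.2 ⟨⌈C⌉₊, fun n => ?_⟩
    exact le_trans (hC _ ⟨n, rfl⟩) (Nat.le_ceil C)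
  refine measure_mono_null hsub (le_antisymm (le_trans (measure_iUnion_le _) ?_) zero_le)
  simp [key]
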